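/- Let (Ω, F, P) be a probability space, let (F_k)_{k≥0} be a filtration with F_k ⊆ F, and let (Z_k)_{k≥0} be real random variables such that each Z_k is F_{k+1}-measurable. Let ν, b > 0 and suppose that for every k and every λ ∈ [0, 1/b], exp(λZ_k) is integrable and E[exp(λZ_k) | F_k] ≤ exp(λ²ν²) almost surely. Then for every integer t ≥ 1 and every s > 0, P((1/t)∑_{k=0}^{t−1} Z_k > s) ≤ exp(−min{s²t/(4ν²), st/(2b)}). -/

import Mathlib

open MeasureTheory ProbabilityTheory
open Filter

lemma aloe_aux_mul_bound {Ω : Type*} [mΩ : MeasurableSpace Ω] (μ : Measure Ω)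
    [IsProbabilityMeasure μ]
    {m : MeasurableSpace Ω} (hm : m ≤ mΩ) {X Y : Ω → ℝ}
    (hX : StronglyMeasurable[m] X) (hXnn : ∀ ω, 0 ≤ X ω) (hXint : Integrable X μ)
    (hYnn : ∀ ω, 0 ≤ Y ω) (hYint : Integrable Y μ)
    {C : ℝ} (hC : 0 ≤ C) (hcond : ∀ᵐ ω ∂μ, (μ[Y|m]) ω ≤ C) :
    Integrable (fun ω => X ω * Y ω) μ ∧ ∫ ω, X ω * Y ω ∂μ ≤ C * ∫ ω, X ω ∂μ := by
  set Xn : ℕ → Ω → ℝ := fun n ω => min (X ω) n with hXn_def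
  have hXn_meas : ∀ n, StronglyMeasurable[m] (Xn n) :=
    fun n => hX.inf stronglyMeasurable_const
  have hXn_nn : ∀ n ω, 0 ≤ Xn n ω := fun n ω => le_min (hXnn ω) (n.cast_nonneg)
  have hXn_le : ∀ n ω, Xn n ω ≤ X ω := fun n ω => min_le_left _ _
  have hXn_bdd : ∀ n, ∀ ω, ‖Xn n ω‖ ≤ n := by
    intro n ω
    rw [Real.norm_eq_abs, abs_of_nonneg (hXn_nn n ω)]
    exact min_le_right _ _
  have hXnY_int : ∀ n, Integrable (Xn n * Y) μ := by
    intro n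
    exact hYint.bdd_mul ((hXn_meas n).mono hm).aestronglyMeasurable (ae_of_all μ (hXn_bdd n))
  have hcondY_nn : 0 ≤ᵐ[μ] μ[Y|m] := condExp_nonneg (ae_of_all μ hYnn)
  have hstep : ∀ n, ∫ ω, (Xn n * Y) ω ∂μ ≤ C * ∫ ω, X ω ∂μ := by
    intro n
    have hpull : μ[Xn n * Y|m] =ᵐ[μ] Xn n * μ[Y|m] :=
      condExp_mul_of_stronglyMeasurable_left (hXn_meas n) (hXnY_int n) hYint
    calc ∫ ω, (Xn n * Y) ω ∂μ = ∫ ω, (μ[Xn n * Y|m]) ω ∂μ := (integral_condExp hm).symm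
      _ = ∫ ω, (Xn n * μ[Y|m]) ω ∂μ := integral_congr_ae hpull
      _ ≤ ∫ ω, C * X ω ∂μ := by
          refine integral_mono_ae ?_ (hXint.const_mul C) ?_
          · exact integrable_condExp.bdd_mul
              ((hXn_meas n).mono hm).aestronglyMeasurable (ae_of_all μ (hXn_bdd n))
          · filter_upwards [hcond, hcondY_nn] with ω h1 h2
            calc Xn n ω * (μ[Y|m]) ω ≤ Xn n ω * C :=
                  mul_le_mul_of_nonneg_left h1 (hXn_nn n ω)
              _ ≤ X ω * C := mul_le_mul_of_nonneg_right (hXn_le n ω) hC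
              _ = C * X ω := mul_comm _ _
      _ = C * ∫ ω, X ω ∂μ := integral_const_mul C X
  have htend : ∀ ω, Tendsto (fun n => Xn n ω * Y ω) atTop (nhds (X ω * Y ω)) := by
    intro ω
    have : ∀ᶠ n : ℕ in atTop, Xn n ω * Y ω = X ω * Y ω := by
      filter_upwards [eventually_ge_atTop ⌈X ω⌉₊] with n hn
      have : X ω ≤ n := le_trans (Nat.le_ceil _) (Nat.cast_le.mpr hn)
      simp [hXn_def, min_eq_left this]
    exact Tendsto.congr' (this.mono fun n h => h.symm) tendsto_const_nhds
  have hmono : ∀ ω, Monotone fun n : ℕ => Xn n ω * Y ω := by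
    intro ω n k hnk
    exact mul_le_mul_of_nonneg_right
      (min_le_min le_rfl (Nat.cast_le.mpr hnk)) (hYnn ω)
  have hsup : ∀ ω, (⨆ n, ENNReal.ofReal (Xn n ω * Y ω)) = ENNReal.ofReal (X ω * Y ω) := by
    intro ω
    refine tendsto_nhds_unique (tendsto_atTop_iSup ?_) (ENNReal.tendsto_ofReal (htend ω))
    exact fun n k hnk => ENNReal.ofReal_le_ofReal (hmono ω hnk)
  have hXY_meas : AEStronglyMeasurable[mΩ] (fun ω => X ω * Y ω) μ :=
    ((hX.mono hm).aestronglyMeasurable).mul hYint.1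
  have hlin : ∫⁻ ω, ENNReal.ofReal (X ω * Y ω) ∂μ ≤ ENNReal.ofReal (C * ∫ ω, X ω ∂μ) := by
    have h1 : ∫⁻ ω, ENNReal.ofReal (X ω * Y ω) ∂μ
        = ⨆ n, ∫⁻ ω, ENNReal.ofReal (Xn n ω * Y ω) ∂μ := by
      rw [← lintegral_iSup']
      · exact lintegral_congr fun ω => (hsup ω).symm
      · exact fun n => (ENNReal.measurable_ofReal.comp_aemeasurable
          ((hXnY_int n).1.aemeasurable))
      · exact ae_of_all μ fun ω n k hnk => ENNReal.ofReal_le_ofReal (hmono ω hnk)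
    rw [h1]
    refine iSup_le fun n => ?_
    have h2 : ∫⁻ ω, ENNReal.ofReal (Xn n ω * Y ω) ∂μ = ENNReal.ofReal (∫ ω, (Xn n * Y) ω ∂μ) :=
      (ofReal_integral_eq_lintegral_ofReal (hXnY_int n)
        (ae_of_all μ fun ω => mul_nonneg (hXn_nn n ω) (hYnn ω))).symm
    rw [h2]
    exact ENNReal.ofReal_le_ofReal (hstep n)
  have hXYnn : ∀ ω, 0 ≤ X ω * Y ω := fun ω => mul_nonneg (hXnn ω) (hYnn ω)
  have hXY_int : Integrable (fun ω => X ω * Y ω) μ := by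
    refine ⟨hXY_meas, ?_⟩
    rw [hasFiniteIntegral_iff_ofReal (ae_of_all μ hXYnn)]
    exact lt_of_le_of_lt hlin ENNReal.ofReal_lt_top
  refine ⟨hXY_int, ?_⟩
  have := ofReal_integral_eq_lintegral_ofReal hXY_int (ae_of_all μ hXYnn)
  rw [← this] at hlin
  exact (ENNReal.ofReal_le_ofReal_iff (mul_nonneg hC (integral_nonneg hXnn))).mp hlin

lemma aloe_mgf_sum_le {Ω : Type*} [mΩ : MeasurableSpace Ω]
    (μ : Measure Ω) [IsProbabilityMeasure μ]
    (ℱ : Filtration ℕ mΩ) (Z : ℕ → Ω → ℝ)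
    (hZmeas : ∀ k, Measurable[ℱ (k + 1)] (Z k))
    (ν b : ℝ) (hν : 0 < ν) (hb : 0 < b)
    (hint : ∀ k, ∀ lam ∈ Set.Icc (0 : ℝ) (1 / b),
      Integrable (fun ω => Real.exp (lam * Z k ω)) μ)
    (hcond : ∀ k, ∀ lam ∈ Set.Icc (0 : ℝ) (1 / b),
      ∀ᵐ ω ∂μ, (μ[fun ω' => Real.exp (lam * Z k ω')|ℱ k]) ω ≤
        Real.exp (lam ^ 2 * ν ^ 2))
    {lam : ℝ} (hlam : lam ∈ Set.Icc (0 : ℝ) (1 / b)) :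
    ∀ t : ℕ, Integrable (fun ω => Real.exp (lam * ∑ k ∈ Finset.range t, Z k ω)) μ ∧
      ∫ ω, Real.exp (lam * ∑ k ∈ Finset.range t, Z k ω) ∂μ ≤
        Real.exp (t * (lam ^ 2 * ν ^ 2)) := by
  intro t
  induction t with
  | zero => simp
  | succ t ih =>
    obtain ⟨ihInt, ihLe⟩ := ih
    have hSmeas : Measurable[ℱ t] fun ω => ∑ k ∈ Finset.range t, Z k ω := by
      refine Finset.measurable_sum _ fun k hk => ?_
      exact (hZmeas k).mono (ℱ.mono (Finset.mem_range.mp hk)) le_rfl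
    have hXsm : StronglyMeasurable[ℱ t]
        fun ω => Real.exp (lam * ∑ k ∈ Finset.range t, Z k ω) :=
      (Real.measurable_exp.comp (measurable_const.mul hSmeas)).stronglyMeasurable
    have key := aloe_aux_mul_bound μ (ℱ.le t) hXsm
      (fun ω => (Real.exp_pos _).le) ihInt
      (Y := fun ω => Real.exp (lam * Z t ω)) (fun ω => (Real.exp_pos _).le)
      (hint t lam hlam) (Real.exp_pos (lam ^ 2 * ν ^ 2)).le (hcond t lam hlam)
    have hfun : (fun ω => Real.exp (lam * ∑ k ∈ Finset.range (t + 1), Z k ω)) =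
        fun ω => Real.exp (lam * ∑ k ∈ Finset.range t, Z k ω) * Real.exp (lam * Z t ω) := by
      funext ω
      rw [Finset.sum_range_succ, mul_add, Real.exp_add]
    constructor
    · rw [hfun]; exact key.1
    · rw [hfun]
      calc ∫ ω, Real.exp (lam * ∑ k ∈ Finset.range t, Z k ω) * Real.exp (lam * Z t ω) ∂μ
          ≤ Real.exp (lam ^ 2 * ν ^ 2) *
            ∫ ω, Real.exp (lam * ∑ k ∈ Finset.range t, Z k ω) ∂μ := key.2
        _ ≤ Real.exp (lam ^ 2 * ν ^ 2) * Real.exp (t * (lam ^ 2 * ν ^ 2)) := by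
            exact mul_le_mul_of_nonneg_left ihLe (Real.exp_pos _).le
        _ = Real.exp ((t + 1 : ℕ) * (lam ^ 2 * ν ^ 2)) := by
            rw [← Real.exp_add]; push_cast; ring_nf

/-- Concentration inequality for adaptive oracle errors (Lemma 5.1): under the
conditional MGF bound `E[exp(λ Z k) | ℱ k] ≤ exp(λ²ν²)` a.s. for `λ ∈ [0, 1/b]`,
the averaged sum satisfies
`P((1/t) ∑_{k<t} Z k > s) ≤ exp(−min{s²t/(4ν²), st/(2b)})`. -/
theorem adaptive_oracle_error_concentration
    {Ω : Type*} [mΩ : MeasurableSpace Ω]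
    (μ : Measure Ω) [IsProbabilityMeasure μ]
    (ℱ : Filtration ℕ mΩ)
    (Z : ℕ → Ω → ℝ)
    (hZmeas : ∀ k, Measurable[ℱ (k + 1)] (Z k))
    (ν b : ℝ) (hν : 0 < ν) (hb : 0 < b)
    (hint : ∀ k, ∀ lam ∈ Set.Icc (0 : ℝ) (1 / b),
      Integrable (fun ω => Real.exp (lam * Z k ω)) μ)
    (hcond : ∀ k, ∀ lam ∈ Set.Icc (0 : ℝ) (1 / b),
      ∀ᵐ ω ∂μ, (μ[fun ω' => Real.exp (lam * Z k ω')|ℱ k]) ω ≤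
        Real.exp (lam ^ 2 * ν ^ 2)) :
    ∀ t : ℕ, 1 ≤ t → ∀ s : ℝ, 0 < s →
      μ {ω | s < (1 / (t : ℝ)) * ∑ k ∈ Finset.range t, Z k ω} ≤
        ENNReal.ofReal
          (Real.exp (-min (s ^ 2 * t / (4 * ν ^ 2)) (s * t / (2 * b)))) := by
  intro t ht s hs
  have htpos : (0 : ℝ) < t := by exact_mod_cast ht
  set lam : ℝ := min (s / (2 * ν ^ 2)) (1 / b) with hlam_def
  have hν2 : (0 : ℝ) < ν ^ 2 := by positivity
  have hlam_pos : 0 < lam := lt_min (by positivity) (by positivity)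
  have hlam_mem : lam ∈ Set.Icc (0 : ℝ) (1 / b) := ⟨hlam_pos.le, min_le_right _ _⟩
  obtain ⟨hInt, hLe⟩ := aloe_mgf_sum_le μ ℱ Z hZmeas ν b hν hb hint hcond hlam_mem t
  have hsub : {ω | s < (1 / (t : ℝ)) * ∑ k ∈ Finset.range t, Z k ω} ⊆
      {ω | s * t ≤ ∑ k ∈ Finset.range t, Z k ω} := by
    intro ω hω
    simp only [Set.mem_setOf_eq] at hω ⊢
    rw [one_div, inv_mul_eq_div] at hω
    exact ((lt_div_iff₀ htpos).mp hω).le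
  have hmarkov := measure_ge_le_exp_mul_mgf (μ := μ)
    (X := fun ω => ∑ k ∈ Finset.range t, Z k ω) (s * t) hlam_pos.le hInt
  have hmgf : mgf (fun ω => ∑ k ∈ Finset.range t, Z k ω) μ lam ≤
      Real.exp (t * (lam ^ 2 * ν ^ 2)) := hLe
  have hexp : Real.exp (-lam * (s * t)) * Real.exp (t * (lam ^ 2 * ν ^ 2)) ≤
      Real.exp (-min (s ^ 2 * t / (4 * ν ^ 2)) (s * t / (2 * b))) := by
    rw [← Real.exp_add, Real.exp_le_exp]
    rcases le_or_gt (s / (2 * ν ^ 2)) (1 / b) with h | h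
    · have hlam_eq : lam = s / (2 * ν ^ 2) := min_eq_left h
      have hmin : min (s ^ 2 * t / (4 * ν ^ 2)) (s * t / (2 * b)) =
          s ^ 2 * t / (4 * ν ^ 2) := by
        refine min_eq_left ?_
        rw [div_le_div_iff₀ (by positivity) (by positivity)]
        rw [div_le_div_iff₀ (by positivity) hb] at h
        nlinarith [mul_le_mul_of_nonneg_left h (mul_nonneg hs.le htpos.le)]
      rw [hmin, hlam_eq]
      have : -(s / (2 * ν ^ 2)) * (s * t) + t * ((s / (2 * ν ^ 2)) ^ 2 * ν ^ 2) =
          -(s ^ 2 * t / (4 * ν ^ 2)) := by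
        field_simp
        ring
      linarith [this.le]
    · have hlam_eq : lam = 1 / b := min_eq_right h.le
      have hsb : 2 * ν ^ 2 < s * b := by
        rw [div_lt_div_iff₀ hb (by positivity)] at h
        linarith
      have hmin : min (s ^ 2 * t / (4 * ν ^ 2)) (s * t / (2 * b)) =
          s * t / (2 * b) := by
        refine min_eq_right ?_
        rw [div_le_div_iff₀ (by positivity) (by positivity)]
        nlinarith [mul_le_mul_of_nonneg_left hsb.le (mul_nonneg hs.le htpos.le)]
      rw [hmin, hlam_eq]
      have hbne : b ≠ 0 := hb.ne'
      rw [show -(1 / b) * (s * t) + t * ((1 / b) ^ 2 * ν ^ 2) =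
            (-(b * s * t) + t * ν ^ 2) / b ^ 2 by field_simp,
          show -(s * t / (2 * b)) = (-(s * t * b) / 2) / b ^ 2 by field_simp]
      rw [div_le_div_iff_of_pos_right (by positivity)]
      nlinarith [mul_le_mul_of_nonneg_left hsb.le htpos.le]
  have hmgf_nonneg : 0 ≤ mgf (fun ω => ∑ k ∈ Finset.range t, Z k ω) μ lam :=
    mgf_nonneg
  have hfinal : (μ {ω | s * t ≤ ∑ k ∈ Finset.range t, Z k ω}).toReal ≤
      Real.exp (-min (s ^ 2 * t / (4 * ν ^ 2)) (s * t / (2 * b))) := by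
    calc (μ {ω | s * t ≤ ∑ k ∈ Finset.range t, Z k ω}).toReal
        ≤ Real.exp (-lam * (s * t)) * mgf (fun ω => ∑ k ∈ Finset.range t, Z k ω) μ lam :=
          hmarkov
      _ ≤ Real.exp (-lam * (s * t)) * Real.exp (t * (lam ^ 2 * ν ^ 2)) :=
          mul_le_mul_of_nonneg_left hmgf (Real.exp_pos _).le
      _ ≤ _ := hexp
  calc μ {ω | s < (1 / (t : ℝ)) * ∑ k ∈ Finset.range t, Z k ω}
      ≤ μ {ω | s * t ≤ ∑ k ∈ Finset.range t, Z k ω} := measure_mono hsub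
    _ ≤ ENNReal.ofReal
          (Real.exp (-min (s ^ 2 * t / (4 * ν ^ 2)) (s * t / (2 * b)))) := by
        rw [← ENNReal.ofReal_toReal (measure_ne_top μ _)]
        exact ENNReal.ofReal_le_ofReal hfinal
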